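/- There exists a universal constant C > 0 such that the following holds. Let n ∈ ℕ, let 0 < p ≤ 1/2 with pn ∈ ℤ, let k ∈ ℕ, and let f : S(n,p) → ℤ be a function of degree ≤ k. Then either f is identically 0, or Pr_x[f(x) ≠ 0] ≥ p^{Ck}, where x is uniform on S(n,p). -/

import Mathlib

open Finset
open scoped Classical

/-- A point of the slice `S(n,p)`: a Boolean vector whose number of ones equals `p * n`. -/
abbrev SlicePoint (n : ℕ) (p : ℝ) : Type :=
  {x : Fin n → Bool // ((Finset.univ.filter (fun i => x i = true)).card : ℝ) = p * n}

variable {n : ℕ} {p : ℝ}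

/-- Expectation with respect to the uniform measure on the slice. -/
noncomputable def sExp (f : SlicePoint n p → ℝ) : ℝ :=
  (∑ x : SlicePoint n p, f x) / (Fintype.card (SlicePoint n p) : ℝ)

/-- The inner product `⟨f,g⟩ = E_x [f x * g x]` on functions on the slice. -/
noncomputable def sInner (f g : SlicePoint n p → ℝ) : ℝ :=
  sExp (fun x => f x * g x)

/-- `‖f‖₂² = E_x [f x ^ 2]`. -/
noncomputable def sNormSq (f : SlicePoint n p → ℝ) : ℝ := sInner f f

/-- `‖f‖₂`. -/
noncomputable def sNorm (f : SlicePoint n p → ℝ) : ℝ := Real.sqrt (sNormSq f)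

/-- The `i`-th coordinate of a slice point, viewed as a real number in `{0,1}`. -/
def coordR (x : SlicePoint n p) (i : Fin n) : ℝ := if x.1 i then 1 else 0

/-- `AND_T (x) = ∏_{i ∈ T} x_i`. -/
def andT (T : Finset (Fin n)) : SlicePoint n p → ℝ := fun x => ∏ i ∈ T, coordR x i

/-- The space `L_k` of functions of degree at most `k` on the slice. -/
def degLE (n : ℕ) (p : ℝ) (k : ℕ) : Submodule ℝ (SlicePoint n p → ℝ) :=
  Submodule.span ℝ {g | ∃ T : Finset (Fin n), T.card ≤ k ∧ g = andT T}

/-- The space `L_{k-1}` (i.e. spanned by `AND_T` with `|T| < k`). -/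
def degLT (n : ℕ) (p : ℝ) (k : ℕ) : Submodule ℝ (SlicePoint n p → ℝ) :=
  Submodule.span ℝ {g | ∃ T : Finset (Fin n), T.card < k ∧ g = andT T}

/-- `fk` is the orthogonal projection `f^{≤ k}` of `f` onto `L_k`. -/
def IsLowProj (n : ℕ) (p : ℝ) (k : ℕ) (f fk : SlicePoint n p → ℝ) : Prop :=
  fk ∈ degLE n p k ∧ ∀ g ∈ degLE n p k, sInner (f - fk) g = 0

/-- `fk` is the orthogonal projection of `f` onto the span of `AND_T`, `|T| < k`. -/
def IsLowProjLT (n : ℕ) (p : ℝ) (k : ℕ) (f fk : SlicePoint n p → ℝ) : Prop :=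
  fk ∈ degLT n p k ∧ ∀ g ∈ degLT n p k, sInner (f - fk) g = 0

/-- `Pr_x [f x ≠ g x]` under the uniform measure on the slice. -/
noncomputable def probNe (f g : SlicePoint n p → ℝ) : ℝ :=
  sExp (fun x => if f x = g x then 0 else 1)

/-- The action of a permutation on a slice point: `(x^π)_{π i} = x_i`. -/
def permPt (π : Equiv.Perm (Fin n)) (x : SlicePoint n p) : SlicePoint n p :=
  ⟨fun i => x.1 (π.symm i), by
    have h : (Finset.univ.filter (fun i => x.1 (π.symm i) = true)) =
        (Finset.univ.filter (fun i => x.1 i = true)).map π.toEmbedding := by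
      ext i
      simp [Finset.mem_map_equiv]
    rw [h, Finset.card_map]
    exact x.2⟩

/-- The derivative operator `D_{ij} f = (f - f^{(ij)})/2`. -/
noncomputable def Dij (i j : Fin n) (f : SlicePoint n p → ℝ) : SlicePoint n p → ℝ :=
  fun x => (f x - f (permPt (Equiv.swap i j) x)) / 2

/-- The derivative operator `D_P` associated with a set `P` of pairs,
obtained by composing the `D_{ab}` for `(a,b) ∈ P` (these commute for tuples). -/
noncomputable def DP (P : Finset (Fin n × Fin n)) (f : SlicePoint n p → ℝ) :
    SlicePoint n p → ℝ :=
  P.toList.foldr (fun q g => Dij q.1 q.2 g) f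

/-- `P` is a `k`-tuple: `k` pairs `(a,b)` with `a < b`, all `2k` entries distinct. -/
def IsTuple {n : ℕ} (k : ℕ) (P : Finset (Fin n × Fin n)) : Prop :=
  P.card = k ∧ (∀ q ∈ P, q.1 < q.2) ∧
    ∀ q ∈ P, ∀ r ∈ P, q ≠ r →
      q.1 ≠ r.1 ∧ q.1 ≠ r.2 ∧ q.2 ≠ r.1 ∧ q.2 ≠ r.2

/-- `P` is shifted: for every pair `(a,b) ∈ P`, every `a' ≤ a` occurs as an entry of `P`. -/
def IsShifted {n : ℕ} (P : Finset (Fin n × Fin n)) : Prop :=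
  ∀ q ∈ P, ∀ a : Fin n, a ≤ q.1 → ∃ r ∈ P, r.1 = a ∨ r.2 = a

/-- `P` is sorted: `a_i < a_j ↔ b_i < b_j`. -/
def IsSorted {n : ℕ} (P : Finset (Fin n × Fin n)) : Prop :=
  ∀ q ∈ P, ∀ r ∈ P, (q.1 < r.1 ↔ q.2 < r.2)

/-- `Ψ_P (x) = ∏_{(a,b) ∈ P} (x_b - x_a)`. -/
def PsiP (P : Finset (Fin n × Fin n)) : SlicePoint n p → ℝ :=
  fun x => ∏ q ∈ P, (coordR x q.2 - coordR x q.1)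

/-- The slice Laplacian `L f = f - (1 / C(n,2)) ∑_{i<j} f^{(ij)}`. -/
noncomputable def sliceLap (f : SlicePoint n p → ℝ) : SlicePoint n p → ℝ :=
  fun x => f x -
    (∑ q ∈ Finset.univ.filter (fun q : Fin n × Fin n => q.1 < q.2),
      f (permPt (Equiv.swap q.1 q.2) x)) / (n.choose 2 : ℝ)

/-- The noise operator `H_t = exp (-t L) = ∑_l (-t)^l L^l / l!`. -/
noncomputable def Ht (t : ℝ) (f : SlicePoint n p → ℝ) : SlicePoint n p → ℝ :=
  fun x => ∑' l : ℕ, ((-t) ^ l / (l.factorial : ℝ)) * (sliceLap^[l] f) x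

/-- The averaging operator `E_I f (x) = E_{Q ∼ S_I} [f (x^Q)]`, averaging over a uniformly
random permutation of the coordinates in `I` (fixing the coordinates outside `I`). -/
noncomputable def avgI (I : Finset (Fin n)) (f : SlicePoint n p → ℝ) : SlicePoint n p → ℝ :=
  fun x => (∑ σ : {σ : Equiv.Perm (Fin n) // ∀ i ∉ I, σ i = i}, f (permPt σ.1 x)) /
    (Fintype.card {σ : Equiv.Perm (Fin n) // ∀ i ∉ I, σ i = i} : ℝ)

/-- The conditional variance `V_I (f) = ‖f - E_I f‖₂²`. -/
noncomputable def condVar (I : Finset (Fin n)) (f : SlicePoint n p → ℝ) : ℝ :=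
  sNormSq (f - avgI I f)

/-- Expectation with respect to the uniform measure on the discrete cube. -/
noncomputable def cExp {n : ℕ} (f : (Fin n → Bool) → ℝ) : ℝ :=
  (∑ x : Fin n → Bool, f x) / (2 ^ n : ℝ)

/-- The Fourier–Walsh coefficient `f̂ (S) = E_x [f x * χ_S x]`. -/
noncomputable def walshCoeff {n : ℕ} (f : (Fin n → Bool) → ℝ) (S : Finset (Fin n)) : ℝ :=
  cExp (fun x => f x * ∏ i ∈ S, (if x i then (-1 : ℝ) else 1))

/-- The Fourier weight of `f` beyond degree `k`: `W^{>k} (f) = ∑_{|S| > k} f̂(S)²`. -/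
noncomputable def WAbove {n : ℕ} (k : ℕ) (f : (Fin n → Bool) → ℝ) : ℝ :=
  ∑ S ∈ Finset.univ.filter (fun S : Finset (Fin n) => k < S.card), walshCoeff f S ^ 2

/-- `Pr_x [f x ≠ g x]` under the uniform measure on the cube. -/
noncomputable def cProbNe {n : ℕ} (f g : (Fin n → Bool) → ℝ) : ℝ :=
  cExp (fun x => if f x = g x then 0 else 1)

/-- The action of a permutation on a point of the cube: `(x^π)_{π i} = x_i`. -/
def cPerm {n : ℕ} (π : Equiv.Perm (Fin n)) (x : Fin n → Bool) : Fin n → Bool :=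
  fun i => x (π.symm i)

/-- The derivative operator on the cube. -/
noncomputable def cDij {n : ℕ} (i j : Fin n) (f : (Fin n → Bool) → ℝ) :
    (Fin n → Bool) → ℝ :=
  fun x => (f x - f (cPerm (Equiv.swap i j) x)) / 2

namespace SliceAux


variable {n : ℕ}

noncomputable def mon (T : Finset (Fin n)) : (Fin n → Bool) → ℝ :=
  fun v => ∏ i ∈ T, (if v i then (1:ℝ) else 0)

noncomputable def spanLE (F : Finset (Fin n)) (k : ℕ) : Submodule ℝ ((Fin n → Bool) → ℝ) :=
  Submodule.span ℝ {g | ∃ T : Finset (Fin n), T ⊆ F ∧ T.card ≤ k ∧ g = mon T}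

noncomputable def Dom (F : Finset (Fin n)) (m : ℕ) : Finset (Fin n → Bool) :=
  univ.filter (fun x => (∀ i, i ∉ F → x i = false) ∧ (univ.filter (fun i => x i = true)).card = m)

lemma mem_Dom {F : Finset (Fin n)} {m : ℕ} {x : Fin n → Bool} :
    x ∈ Dom F m ↔ (∀ i, i ∉ F → x i = false) ∧ (univ.filter (fun i => x i = true)).card = m := by
  simp [Dom]

lemma mon_update_true (T : Finset (Fin n)) (i : Fin n) (v : Fin n → Bool) :
    mon T (Function.update v i true) = mon (T.erase i) v := by
  unfold mon
  by_cases hi : i ∈ T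
  · rw [← Finset.prod_erase_mul _ _ hi]
    rw [Function.update_self]
    simp only [if_true, mul_one]
    apply Finset.prod_congr rfl
    intro t ht
    rw [Function.update_of_ne (Finset.ne_of_mem_erase ht)]
  · rw [Finset.erase_eq_of_notMem hi]
    apply Finset.prod_congr rfl
    intro t ht
    rw [Function.update_of_ne]
    intro h; exact hi (h ▸ ht)

lemma card_Dom (F : Finset (Fin n)) (m : ℕ) : (Dom F m).card = F.card.choose m := by
  rw [← Finset.card_powersetCard]
  refine Finset.card_bij' (fun x _ => univ.filter (fun t => x t = true))
    (fun S _ => fun t => decide (t ∈ S)) ?_ ?_ ?_ ?_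
  · intro x hx
    rw [mem_Dom] at hx
    rw [Finset.mem_powersetCard]
    refine ⟨fun t ht => ?_, hx.2⟩
    simp only [mem_filter, mem_univ, true_and] at ht
    by_contra hF
    rw [hx.1 t hF] at ht; exact Bool.noConfusion ht
  · intro S hS
    rw [Finset.mem_powersetCard] at hS
    rw [mem_Dom]
    constructor
    · intro i hi
      simp only [decide_eq_false_iff_not]
      exact fun h => hi (hS.1 h)
    · have he : (univ.filter (fun i => decide (i ∈ S) = true)) = S := by
        ext t; simp
      rw [he]; exact hS.2
  · intro x hx
    rw [mem_Dom] at hx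
    funext t
    simp
  · intro S hS
    ext t
    simp

lemma card_ones_comp (w : Fin n → Bool) (σ : Equiv.Perm (Fin n)) :
    (univ.filter (fun t => w (σ t) = true)).card = (univ.filter (fun t => w t = true)).card := by
  refine Finset.card_bij' (fun t _ => σ t) (fun t _ => σ.symm t) ?_ ?_ ?_ ?_ <;>
    intro t ht <;>
    simp only [mem_filter, mem_univ, true_and, Equiv.apply_symm_apply, Equiv.symm_apply_apply] at ht ⊢ <;>
    exact ht

lemma comp_swap_mem_Dom {F : Finset (Fin n)} {m : ℕ} {w : Fin n → Bool}
    (hw : w ∈ Dom F m) {i j : Fin n} (hi : i ∈ F) (hj : j ∈ F) :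
    (w ∘ (Equiv.swap i j)) ∈ Dom F m := by
  rw [mem_Dom] at hw ⊢
  constructor
  · intro t ht
    have : Equiv.swap i j t = t :=
      Equiv.swap_apply_of_ne_of_ne (fun h => ht (h ▸ hi)) (fun h => ht (h ▸ hj))
    simp only [Function.comp_apply, this]
    exact hw.1 t ht
  · rw [← hw.2]
    exact card_ones_comp w _

lemma exists_one_zero {x y : Fin n → Bool}
    (hx : (univ.filter (fun i => x i = true)).card = m)
    (hy : (univ.filter (fun i => y i = true)).card = m) (hxy : x ≠ y) :
    ∃ i, x i = true ∧ y i = false := by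
  by_contra h
  push_neg at h
  have hsub : (univ.filter (fun i => x i = true)) ⊆ (univ.filter (fun i => y i = true)) := by
    intro t ht
    simp only [mem_filter, mem_univ, true_and] at ht ⊢
    have := h t ht
    cases hyt : y t
    · exact absurd hyt this
    · rfl
  have heq := Finset.eq_of_subset_of_card_le hsub (by rw [hx, hy])
  apply hxy
  funext t
  have : (t ∈ univ.filter (fun i => x i = true)) ↔ (t ∈ univ.filter (fun i => y i = true)) := by
    rw [heq]
  simp only [mem_filter, mem_univ, true_and] at this
  cases hxt : x t <;> cases hyt : y t <;> simp_all

lemma connect (F : Finset (Fin n)) (m : ℕ) (f : (Fin n → Bool) → ℝ) :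
    ∀ (c : ℕ) (x y : Fin n → Bool), (univ.filter (fun t => x t ≠ y t)).card ≤ c →
      x ∈ Dom F m → y ∈ Dom F m → f x ≠ f y →
      ∃ w i j, w ∈ Dom F m ∧ i ∈ F ∧ j ∈ F ∧ i ≠ j ∧ w i = true ∧ w j = false ∧
        f w ≠ f (w ∘ (Equiv.swap i j)) := by
  intro c
  induction c with
  | zero =>
    intro x y hc hx hy hf
    exfalso
    apply hf
    have : x = y := by
      funext t
      by_contra ht
      have : t ∈ univ.filter (fun t => x t ≠ y t) := by simp [ht]
      have := Finset.card_pos.mpr ⟨t, this⟩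
      omega
    rw [this]
  | succ c ih =>
    intro x y hc hx hy hf
    have hxy : x ≠ y := fun h => hf (by rw [h])
    rw [mem_Dom] at hx hy
    obtain ⟨i, hxi, hyi⟩ := exists_one_zero hx.2 hy.2 hxy
    obtain ⟨j, hyj, hxj⟩ := exists_one_zero hy.2 hx.2 (Ne.symm hxy)
    have hiF : i ∈ F := by
      by_contra hiF; rw [hx.1 i hiF] at hxi; exact Bool.noConfusion hxi
    have hjF : j ∈ F := by
      by_contra hjF; rw [hy.1 j hjF] at hyj; exact Bool.noConfusion hyj
    have hij : i ≠ j := by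
      intro h; rw [h, hxj] at hxi; exact Bool.noConfusion hxi
    by_cases hfs : f x ≠ f (x ∘ (Equiv.swap i j))
    · exact ⟨x, i, j, mem_Dom.mpr hx, hiF, hjF, hij, hxi, hxj, hfs⟩
    · push_neg at hfs
      set x' := x ∘ (Equiv.swap i j) with hx'def
      have hx'i : x' i = false := by
        simp only [hx'def, Function.comp_apply, Equiv.swap_apply_left]; exact hxj
      have hx'j : x' j = true := by
        simp only [hx'def, Function.comp_apply, Equiv.swap_apply_right]; exact hxi
      have hx'mem : x' ∈ Dom F m := comp_swap_mem_Dom (mem_Dom.mpr hx) hiF hjF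
      have hsub : (univ.filter (fun t => x' t ≠ y t)) ⊆ (univ.filter (fun t => x t ≠ y t)).erase i := by
        intro t ht
        simp only [mem_filter, mem_univ, true_and] at ht
        rw [Finset.mem_erase]
        constructor
        · intro h
          rw [h, hx'i, hyi] at ht
          exact ht rfl
        · simp only [mem_filter, mem_univ, true_and]
          intro h
          apply ht
          by_cases hti : t = i
          · rw [hti, hx'i, hyi]
          · by_cases htj : t = j
            · rw [htj, hx'j, hyj]
            · have : Equiv.swap i j t = t := Equiv.swap_apply_of_ne_of_ne hti htj
              rw [hx'def]
              simp only [Function.comp_apply, this]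
              exact h
      have hcard : (univ.filter (fun t => x' t ≠ y t)).card ≤ c := by
        have h1 := Finset.card_le_card hsub
        have hi_mem : i ∈ univ.filter (fun t => x t ≠ y t) := by
          simp only [mem_filter, mem_univ, true_and]
          rw [hxi, hyi]; exact fun h => Bool.noConfusion h
        have h2 := Finset.card_erase_of_mem hi_mem
        have h3 := Finset.card_pos.mpr ⟨i, hi_mem⟩
        omega
      exact ih x' y hcard hx'mem (mem_Dom.mpr hy) (by rw [← hfs]; exact hf)

lemma mon_mem_spanLE {F : Finset (Fin n)} {k : ℕ} {T : Finset (Fin n)}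
    (hT : T ⊆ F) (hk : T.card ≤ k) : mon T ∈ spanLE F k :=
  Submodule.subset_span ⟨T, hT, hk, rfl⟩

lemma spanLE_mono {F : Finset (Fin n)} {k k' : ℕ} (h : k ≤ k') : spanLE F k ≤ spanLE F k' := by
  apply Submodule.span_le.mpr
  rintro g ⟨T, hT, hk, rfl⟩
  exact mon_mem_spanLE hT (le_trans hk h)

lemma deriv_decomp {F : Finset (Fin n)} {k : ℕ} {i j : Fin n} (hi : i ∈ F) (hj : j ∈ F)
    (hij : i ≠ j) {f : (Fin n → Bool) → ℝ} (hf : f ∈ spanLE F (k+1)) :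
    ∃ a ∈ spanLE ((F.erase i).erase j) k, ∀ z : Fin n → Bool, z i = false → z j = false →
      f (Function.update z i true) - f (Function.update z j true) = a z := by
  classical
  set Φ : ((Fin n → Bool) → ℝ) →ₗ[ℝ] ((Fin n → Bool) → ℝ) :=
    (LinearMap.funLeft ℝ ℝ (fun z => Function.update z i true)) -
    (LinearMap.funLeft ℝ ℝ (fun z => Function.update z j true)) with hΦ
  have hΦapp : ∀ (h : (Fin n → Bool) → ℝ) z,
      Φ h z = h (Function.update z i true) - h (Function.update z j true) := by
    intro h z; simp [hΦ, LinearMap.funLeft]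
  set bad : Set ((Fin n → Bool) → ℝ) :=
    {g | ∃ T : Finset (Fin n), T ⊆ F ∧ (i ∈ T ∨ j ∈ T) ∧ g = mon T} with hbad
  have hsup : Φ f ∈ spanLE ((F.erase i).erase j) k ⊔ Submodule.span ℝ bad := by
    have hmap : Φ f ∈ Submodule.map Φ (spanLE F (k+1)) := ⟨f, hf, rfl⟩
    rw [spanLE, Submodule.map_span] at hmap
    refine (Submodule.span_le.mpr ?_) hmap
    rintro g ⟨h, ⟨T, hTF, hTk, rfl⟩, rfl⟩
    have himg : Φ (mon T) = mon (T.erase i) - mon (T.erase j) := by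
      funext z
      rw [hΦapp, mon_update_true, mon_update_true]
      rfl
    rw [SetLike.mem_coe, himg]
    by_cases hiT : i ∈ T <;> by_cases hjT : j ∈ T
    · -- both: both erased monomials are bad
      apply sub_mem
      · apply Submodule.mem_sup_right
        exact Submodule.subset_span ⟨T.erase i, (Finset.erase_subset _ _).trans hTF,
          Or.inr (Finset.mem_erase.mpr ⟨Ne.symm hij, hjT⟩), rfl⟩
      · apply Submodule.mem_sup_right
        exact Submodule.subset_span ⟨T.erase j, (Finset.erase_subset _ _).trans hTF,
          Or.inl (Finset.mem_erase.mpr ⟨hij, hiT⟩), rfl⟩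
    · apply sub_mem
      · apply Submodule.mem_sup_left
        apply mon_mem_spanLE
        · intro t ht
          rw [Finset.mem_erase] at ht ⊢
          refine ⟨?_, Finset.mem_erase.mpr ⟨ht.1, hTF ht.2⟩⟩
          intro h; exact hjT (h ▸ ht.2)
        · have := Finset.card_erase_of_mem hiT
          omega
      · rw [Finset.erase_eq_of_notMem hjT]
        apply Submodule.mem_sup_right
        exact Submodule.subset_span ⟨T, hTF, Or.inl hiT, rfl⟩
    · apply sub_mem
      · rw [Finset.erase_eq_of_notMem hiT]
        apply Submodule.mem_sup_right
        exact Submodule.subset_span ⟨T, hTF, Or.inr hjT, rfl⟩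
      · apply Submodule.mem_sup_left
        apply mon_mem_spanLE
        · intro t ht
          rw [Finset.mem_erase] at ht
          rw [Finset.mem_erase, Finset.mem_erase]
          exact ⟨ht.1, fun h => hiT (by rw [← h]; exact ht.2), hTF ht.2⟩
        · have := Finset.card_erase_of_mem hjT
          omega
    · rw [Finset.erase_eq_of_notMem hiT, Finset.erase_eq_of_notMem hjT, sub_self]
      exact Submodule.zero_mem _
  obtain ⟨a, ha, b, hb, hab⟩ := Submodule.mem_sup.mp hsup
  have hbz : ∀ b' ∈ Submodule.span ℝ bad, ∀ z : Fin n → Bool,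
      z i = false → z j = false → b' z = 0 := by
    intro b' hb'
    induction hb' using Submodule.span_induction with
    | mem g hg =>
      intro z hzi hzj
      obtain ⟨T, hTF, hTij, rfl⟩ := hg
      unfold mon
      rcases hTij with hiT | hjT
      · exact Finset.prod_eq_zero hiT (by rw [hzi]; rfl)
      · exact Finset.prod_eq_zero hjT (by rw [hzj]; rfl)
    | zero => intro z _ _; rfl
    | add g₁ g₂ h₁ h₂ p₁ p₂ =>
      intro z hzi hzj
      simp only [Pi.add_apply, p₁ z hzi hzj, p₂ z hzi hzj, add_zero]
    | smul c g hg pg =>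
      intro z hzi hzj
      simp only [Pi.smul_apply, pg z hzi hzj, smul_eq_mul, mul_zero]
  refine ⟨a, ha, fun z hzi hzj => ?_⟩
  have := congrFun hab z
  rw [hΦapp] at this
  rw [← this]
  simp [Pi.add_apply, hbz b hb z hzi hzj]

lemma choose_pred_le {N m : ℕ} (hm : 1 ≤ m) (hN : 2 ≤ N) :
    (N - 2).choose (m - 1) ≤ N.choose m := by
  obtain ⟨a, rfl⟩ : ∃ a, N = a + 2 := ⟨N - 2, by omega⟩
  obtain ⟨b, rfl⟩ : ∃ b, m = b + 1 := ⟨m - 1, by omega⟩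
  calc a.choose b ≤ (a+1).choose b := Nat.choose_le_choose b (by omega)
    _ ≤ (a+1).choose b + (a+1).choose (b+1) := Nat.le_add_right _ _
    _ = (a+2).choose (b+1) := (Nat.choose_succ_succ _ _).symm

lemma choose_sub_le : ∀ (d N m : ℕ), 2 * m ≤ N →
    (N - 2 * d).choose (m - d) ≤ N.choose m := by
  intro d
  induction d with
  | zero => intro N m _; simp
  | succ d ih =>
    intro N m hm
    rcases Nat.eq_zero_or_pos m with rfl | hm1
    · simp
    · have hN : 2 ≤ N := by omega
      calc (N - 2*(d+1)).choose (m - (d+1))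
          = ((N-2) - 2*d).choose ((m-1) - d) := by
            congr 1 <;> omega
        _ ≤ (N-2).choose (m-1) := ih (N-2) (m-1) (by omega)
        _ ≤ N.choose m := choose_pred_le hm1 hN

lemma const_on_Dom_of_deg_zero {F : Finset (Fin n)} {f : (Fin n → Bool) → ℝ}
    (hf : f ∈ spanLE F 0) : ∀ x y, f x = f y := by
  induction hf using Submodule.span_induction with
  | mem g hg =>
    obtain ⟨T, _, hT, rfl⟩ := hg
    intro x y
    have hT0 : T = ∅ := Finset.card_eq_zero.mp (Nat.le_zero.mp hT)
    subst hT0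
    rfl
  | zero => intro x y; rfl
  | add g₁ g₂ h₁ h₂ p₁ p₂ => intro x y; simp only [Pi.add_apply, p₁ x y, p₂ x y]
  | smul c g hg pg => intro x y; simp only [Pi.smul_apply, pg x y]

lemma main_count : ∀ (k : ℕ) (F : Finset (Fin n)) (m : ℕ) (f : (Fin n → Bool) → ℝ),
    2 * m ≤ F.card → f ∈ spanLE F k →
    ∀ x0 ∈ Dom F m, f x0 ≠ 0 →
    (F.card - 2 * min k m).choose (m - min k m) ≤
      ((Dom F m).filter (fun x => f x ≠ 0)).card := by
  intro k
  induction k with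
  | zero =>
    intro F m f hFm hf x0 hx0 hfx0
    have hconst := const_on_Dom_of_deg_zero hf
    have : (Dom F m).filter (fun x => f x ≠ 0) = Dom F m := by
      apply Finset.filter_true_of_mem
      intro x _
      rw [hconst x x0]; exact hfx0
    rw [this, card_Dom]
    simp only [Nat.zero_min, Nat.mul_zero, Nat.sub_zero]
    exact le_refl _
  | succ k ih =>
    intro F m f hFm hf x0 hx0 hfx0
    by_cases hconst : ∀ x ∈ Dom F m, f x = f x0
    · have : (Dom F m).filter (fun x => f x ≠ 0) = Dom F m := by
        apply Finset.filter_true_of_mem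
        intro x hx
        rw [hconst x hx]; exact hfx0
      rw [this, card_Dom]
      exact choose_sub_le _ _ _ hFm
    · push_neg at hconst
      obtain ⟨y, hy, hfy⟩ := hconst
      obtain ⟨w, i, j, hw, hiF, hjF, hij, hwi, hwj, hfw⟩ :=
        connect F m f _ x0 y (le_refl _) hx0 hy (Ne.symm hfy)
      have hm1 : 1 ≤ m := by
        have hwD := (mem_Dom.mp hw).2
        have : i ∈ univ.filter (fun t => w t = true) := by simp [hwi]
        have := Finset.card_pos.mpr ⟨i, this⟩
        omega
      set F' := (F.erase i).erase j with hF'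
      have hjFi : j ∈ F.erase i := Finset.mem_erase.mpr ⟨Ne.symm hij, hjF⟩
      have hF'card : F'.card = F.card - 2 := by
        rw [hF', Finset.card_erase_of_mem hjFi, Finset.card_erase_of_mem hiF]
        omega
      have hiF' : i ∉ F' := fun h => (Finset.mem_erase.mp (Finset.mem_erase.mp h).2).1 rfl
      have hjF' : j ∉ F' := fun h => (Finset.mem_erase.mp h).1 rfl
      obtain ⟨a, ha, hagree⟩ := deriv_decomp hiF hjF hij hf
      set z0 := Function.update w i false with hz0
      have hz0i : z0 i = false := by rw [hz0, Function.update_self]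
      have hz0j : z0 j = false := by rw [hz0, Function.update_of_ne (Ne.symm hij)]; exact hwj
      have hz0mem : z0 ∈ Dom F' (m-1) := by
        rw [mem_Dom]
        constructor
        · intro t ht
          by_cases hti : t = i
          · rw [hti]; exact hz0i
          · by_cases htj : t = j
            · rw [htj]; exact hz0j
            · rw [hz0, Function.update_of_ne hti]
              apply (mem_Dom.mp hw).1
              intro htF
              exact ht (Finset.mem_erase.mpr ⟨htj, Finset.mem_erase.mpr ⟨hti, htF⟩⟩)
        · have : univ.filter (fun t => z0 t = true) = (univ.filter (fun t => w t = true)).erase i := by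
            ext t
            simp only [mem_filter, mem_univ, true_and, Finset.mem_erase]
            by_cases hti : t = i
            · subst hti; simp [hz0i]
            · rw [hz0, Function.update_of_ne hti]; tauto
          rw [this, Finset.card_erase_of_mem (by simp [hwi]), (mem_Dom.mp hw).2]
      have hupd_i : Function.update z0 i true = w := by
        funext t
        by_cases hti : t = i
        · subst hti; rw [Function.update_self]; exact hwi.symm
        · rw [Function.update_of_ne hti, hz0, Function.update_of_ne hti]
      have hupd_j : Function.update z0 j true = w ∘ (Equiv.swap i j) := by
        funext t
        by_cases htj : t = j
        · subst htj
          rw [Function.update_self]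
          simp only [Function.comp_apply, Equiv.swap_apply_right]
          exact hwi.symm
        · rw [Function.update_of_ne htj]
          by_cases hti : t = i
          · subst hti
            simp only [Function.comp_apply, Equiv.swap_apply_left, hz0i]
            exact hwj.symm
          · rw [hz0, Function.update_of_ne hti]
            simp only [Function.comp_apply, Equiv.swap_apply_of_ne_of_ne hti htj]
      have haz0 : a z0 ≠ 0 := by
        rw [← hagree z0 hz0i hz0j, hupd_i, hupd_j]
        exact sub_ne_zero_of_ne hfw
      have hIH := ih F' (m-1) a (by omega) ha z0 hz0mem haz0
      -- transfer counts
      have hcount : ((Dom F' (m-1)).filter (fun z => a z ≠ 0)).card ≤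
          ((Dom F m).filter (fun x => f x ≠ 0)).card := by
        classical
        set inj : (Fin n → Bool) → (Fin n → Bool) := fun z =>
          if f (Function.update z i true) ≠ 0 then Function.update z i true
          else Function.update z j true with hinj
        have hzfalse : ∀ z ∈ Dom F' (m-1), z i = false ∧ z j = false := by
          intro z hz
          exact ⟨(mem_Dom.mp hz).1 i hiF', (mem_Dom.mp hz).1 j hjF'⟩
        have hrec : ∀ z ∈ Dom F' (m-1),
            Function.update (Function.update (inj z) i false) j false = z := by
          intro z hz
          obtain ⟨hzi, hzj⟩ := hzfalse z hz
          funext t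
          by_cases htj : t = j
          · subst htj; rw [Function.update_self]; exact hzj.symm
          · rw [Function.update_of_ne htj]
            by_cases hti : t = i
            · subst hti; rw [Function.update_self]; exact hzi.symm
            · rw [Function.update_of_ne hti]
              simp only [hinj]
              split_ifs with hc
              · rw [Function.update_of_ne hti]
              · rw [Function.update_of_ne htj]
        have hmapsto : ∀ z ∈ (Dom F' (m-1)).filter (fun z => a z ≠ 0),
            inj z ∈ (Dom F m).filter (fun x => f x ≠ 0) := by
          intro z hz
          rw [Finset.mem_filter] at hz
          obtain ⟨hzD, hza⟩ := hz
          obtain ⟨hzi, hzj⟩ := hzfalse z hzD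
          have hnb : f (Function.update z i true) ≠ 0 ∨ f (Function.update z j true) ≠ 0 := by
            by_contra hnn
            push_neg at hnn
            have := hagree z hzi hzj
            rw [hnn.1, hnn.2, sub_zero] at this
            exact hza this.symm
          have hmem : ∀ (u : Fin n), u = i ∨ u = j →
              Function.update z u true ∈ Dom F m := by
            rintro u hu
            have huF : u ∈ F := by rcases hu with rfl | rfl; exacts [hiF, hjF]
            have hzu : z u = false := by rcases hu with rfl | rfl; exacts [hzi, hzj]
            rw [mem_Dom]
            constructor
            · intro t ht
              have htu : t ≠ u := fun h => ht (h ▸ huF)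
              rw [Function.update_of_ne htu]
              apply (mem_Dom.mp hzD).1
              intro htF'
              exact ht (Finset.mem_of_mem_erase (Finset.mem_of_mem_erase htF'))
            · have : univ.filter (fun t => Function.update z u true t = true) =
                  insert u (univ.filter (fun t => z t = true)) := by
                ext t
                simp only [mem_filter, mem_univ, true_and, Finset.mem_insert]
                by_cases htu : t = u
                · subst htu; simp [Function.update_self]
                · rw [Function.update_of_ne htu]; tauto
              rw [this, Finset.card_insert_of_notMem (by simp [hzu]), (mem_Dom.mp hzD).2]
              omega
          rw [Finset.mem_filter]
          simp only [hinj]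
          split_ifs with hc
          · exact ⟨hmem i (Or.inl rfl), hc⟩
          · push_neg at hc
            rcases hnb with h | h
            · exact absurd hc h
            · exact ⟨hmem j (Or.inr rfl), h⟩
        apply Finset.card_le_card_of_injOn inj hmapsto
        intro z1 hz1 z2 hz2 heq
        rw [Finset.mem_coe, Finset.mem_filter] at hz1 hz2
        calc z1 = Function.update (Function.update (inj z1) i false) j false :=
              (hrec z1 hz1.1).symm
          _ = Function.update (Function.update (inj z2) i false) j false := by rw [heq]
          _ = z2 := hrec z2 hz2.1
      have harith : (F'.card - 2 * min k (m-1)).choose ((m-1) - min k (m-1)) =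
          (F.card - 2 * min (k+1) m).choose (m - min (k+1) m) := by
        rw [hF'card]
        congr 1 <;> omega
      rw [← harith]
      exact le_trans hIH hcount


lemma step_ineq {N m : ℕ} (hm : 1 ≤ m) (hN : 2*m ≤ N) :
    N.choose m * m ≤ 2*N*((N-2).choose (m-1)) := by
  have h1 : N.choose m * m = N * (N-1).choose (m-1) := by
    have := Nat.add_one_mul_choose_eq (N-1) (m-1)
    have hN' : N-1+1 = N := by omega
    have hm' : m-1+1 = m := by omega
    rw [hN', hm'] at this
    omega
  rw [h1]
  have h2 : (N-1).choose (m-1) ≤ 2 * (N-2).choose (m-1) := by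
    rcases Nat.lt_or_ge m 2 with hm2 | hm2
    · have : m = 1 := by omega
      subst this
      simp
    · have hpas : (N-1).choose (m-1) = (N-2).choose (m-2) + (N-2).choose (m-1) := by
        have := Nat.choose_succ_succ (N-2) (m-2)
        have e1 : (N-2).succ = N-1 := by omega
        have e2 : (m-2).succ = m-1 := by omega
        rw [e1, e2] at this
        exact this
      have hmono : (N-2).choose (m-2) ≤ (N-2).choose (m-1) := by
        have : (m-2) < (N-2)/2 := by omega
        have := Nat.choose_le_succ_of_lt_half_left this
        have e2 : (m-2)+1 = m-1 := by omega
        rwa [e2] at this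
      omega
  calc N * (N-1).choose (m-1) ≤ N * (2 * (N-2).choose (m-1)) :=
        Nat.mul_le_mul_left N h2
    _ = 2*N*((N-2).choose (m-1)) := by ring

lemma NR1 : ∀ (k N m : ℕ), 2*m ≤ N →
    N.choose m * m.descFactorial (min k m) ≤
      (2*N)^(min k m) * (N - 2*min k m).choose (m - min k m) := by
  intro k
  induction k with
  | zero => intro N m _; simp
  | succ k ih =>
    intro N m hN
    rcases Nat.eq_zero_or_pos m with rfl | hm
    · simp
    obtain ⟨m', rfl⟩ : ∃ m', m = m' + 1 := ⟨m - 1, by omega⟩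
    rw [Nat.succ_min_succ]
    rw [Nat.succ_descFactorial_succ]
    have hIH := ih (N-2) m' (by omega)
    calc N.choose (m'+1) * ((m'+1) * m'.descFactorial (min k m'))
        = (N.choose (m'+1) * (m'+1)) * m'.descFactorial (min k m') := by ring
      _ ≤ (2*N*((N-2).choose m')) * m'.descFactorial (min k m') := by
          apply Nat.mul_le_mul_right
          exact step_ineq (by omega) hN
      _ = (2*N) * ((N-2).choose m' * m'.descFactorial (min k m')) := by ring
      _ ≤ (2*N) * ((2*(N-2))^(min k m') * ((N-2) - 2*min k m').choose (m' - min k m')) := by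
          apply Nat.mul_le_mul_left
          have := hIH
          have e : (N-2).choose m' = (N-2).choose (m'+1-1) := by norm_num
          exact this
      _ ≤ (2*N) * ((2*N)^(min k m') * ((N-2) - 2*min k m').choose (m' - min k m')) := by
          apply Nat.mul_le_mul_left
          apply Nat.mul_le_mul_right
          apply Nat.pow_le_pow_left
          omega
      _ = (2*N)^(min k m' + 1) * ((N-2) - 2*min k m').choose (m' - min k m') := by ring
      _ = (2*N)^(min k m' + 1) * (N - 2*(min k m' + 1)).choose ((m'+1) - (min k m' + 1)) := by
          congr 2 <;> omega

lemma sub_pow_le_descFactorial : ∀ (d m : ℕ), (m - d)^d ≤ m.descFactorial d := by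
  intro d
  induction d with
  | zero => intro m; simp
  | succ d ih =>
    intro m
    rw [Nat.descFactorial_succ]
    calc (m - (d+1))^(d+1) ≤ (m-d)^(d+1) := Nat.pow_le_pow_left (by omega) _
      _ = (m-d) * (m-d)^d := by ring
      _ ≤ (m-d) * m.descFactorial d := Nat.mul_le_mul_left _ (ih m)

lemma descFactorial_mul_factorial {d m : ℕ} (h : d ≤ m) :
    m.descFactorial d * (m - d).factorial = m.factorial := by
  rw [Nat.descFactorial_eq_factorial_mul_choose]
  have := Nat.choose_mul_factorial_mul_factorial h
  calc d.factorial * m.choose d * (m-d).factorial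
      = m.choose d * d.factorial * (m - d).factorial := by ring
    _ = m.factorial := this

lemma exp_bound (m : ℕ) (hm : 1 ≤ m) : ((m:ℝ)+1)^m ≤ 3 * (m:ℝ)^m := by
  have hm0 : (0:ℝ) < m := by exact_mod_cast hm
  have h1 : ((m:ℝ)+1)^m = (m:ℝ)^m * (1 + 1/m)^m := by
    rw [← mul_pow]
    congr 1
    field_simp
  rw [h1]
  have h2 : (1 + 1/(m:ℝ))^m ≤ 3 := by
    have hle : 1 + 1/(m:ℝ) ≤ Real.exp (1/m) := by
      have := Real.add_one_le_exp (1/(m:ℝ))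
      linarith
    have h3 : (1 + 1/(m:ℝ))^m ≤ (Real.exp (1/m))^m := by
      apply pow_le_pow_left₀ (by positivity) hle
    rw [← Real.exp_nat_mul] at h3
    have : (m:ℝ) * (1/m) = 1 := by field_simp
    rw [this] at h3
    have := Real.exp_one_lt_d9
    linarith
  calc (m:ℝ)^m * (1 + 1/m)^m ≤ (m:ℝ)^m * 3 := by
        apply mul_le_mul_of_nonneg_left h2 (by positivity)
    _ = 3 * (m:ℝ)^m := by ring

lemma fact4 : ∀ m : ℕ, (m:ℝ)^m ≤ 4^m * m.factorial := by
  intro m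
  induction m with
  | zero => simp
  | succ m ih =>
    rcases Nat.eq_zero_or_pos m with rfl | hm
    · norm_num
    have h1 : ((m:ℝ)+1)^(m+1) = ((m:ℝ)+1) * ((m:ℝ)+1)^m := by ring
    push_cast
    rw [h1]
    calc ((m:ℝ)+1) * ((m:ℝ)+1)^m ≤ ((m:ℝ)+1) * (3 * (m:ℝ)^m) := by
          apply mul_le_mul_of_nonneg_left (exp_bound m hm) (by positivity)
      _ ≤ ((m:ℝ)+1) * (3 * (4^m * m.factorial)) := by
          apply mul_le_mul_of_nonneg_left ?_ (by positivity)
          apply mul_le_mul_of_nonneg_left ih (by norm_num)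
      _ ≤ (4:ℝ)^(m+1) * ((m+1) * m.factorial) := by
          have h0 : (0:ℝ) ≤ ((m:ℝ)+1) * (4^m * m.factorial) := by positivity
          calc ((m:ℝ)+1) * (3 * (4^m * m.factorial))
              = 3 * (((m:ℝ)+1) * (4^m * m.factorial)) := by ring
            _ ≤ 4 * (((m:ℝ)+1) * (4^m * m.factorial)) :=
                mul_le_mul_of_nonneg_right (by norm_num) h0
            _ = (4:ℝ)^(m+1) * ((m+1) * m.factorial) := by rw [pow_succ]; ring
      _ = (4:ℝ)^(m+1) * (m+1).factorial := by
          rw [Nat.factorial_succ]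
          push_cast
          ring


lemma key_ineq {N m k : ℕ} (hm : 1 ≤ m) (hN : 2*m ≤ N) :
    ((m:ℝ)/N)^(10*k) * (2*(N:ℝ))^(min k m) ≤ (m.descFactorial (min k m) : ℝ) := by
  have hN0 : (0:ℝ) < N := by
    have : (2:ℕ) ≤ N := by omega
    exact_mod_cast Nat.lt_of_lt_of_le (by norm_num) this
  have hm0 : (0:ℝ) < m := by exact_mod_cast hm
  set P := (m:ℝ)/N with hPdef
  have hP0 : 0 < P := by positivity
  have hPN : P * N = m := by
    rw [hPdef]
    field_simp
  have hP : P ≤ 1/2 := by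
    rw [hPdef, div_le_iff₀ hN0]
    have : (2:ℝ) * m ≤ N := by exact_mod_cast hN
    linarith
  have hP1 : P ≤ 1 := by linarith
  have hPc : ∀ c : ℕ, P^(c+1) * (2*(N:ℝ)) ≤ 2*(m:ℝ)*(1/2)^c := by
    intro c
    have h1 : P^(c+1) * (2*(N:ℝ)) = 2*(m:ℝ)*P^c := by
      have hNe : (N:ℝ) ≠ 0 := ne_of_gt hN0
      rw [hPdef, pow_succ]
      field_simp
    rw [h1]
    apply mul_le_mul_of_nonneg_left _ (by positivity)
    exact pow_le_pow_left₀ (le_of_lt hP0) hP c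
  rcases le_or_gt m k with hmk | hkm
  · -- m ≤ k, min = m
    have hd : min k m = m := min_eq_right hmk
    rw [hd, Nat.descFactorial_self]
    have step1 : P^(10*k) ≤ P^(4*m) :=
      pow_le_pow_of_le_one (le_of_lt hP0) hP1 (by omega)
    have step2 : P^4 * (2*(N:ℝ)) ≤ (m:ℝ)/4 := by
      have h := hPc 3
      have e : 2*(m:ℝ)*(1/2)^3 = (m:ℝ)/4 := by
        rw [show ((1:ℝ)/2)^3 = 1/8 by norm_num]
        ring
      rw [e] at h
      exact_mod_cast h
    calc P^(10*k) * (2*(N:ℝ))^m ≤ P^(4*m) * (2*(N:ℝ))^m := by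
          apply mul_le_mul_of_nonneg_right step1 (by positivity)
      _ = (P^4 * (2*(N:ℝ)))^m := by
          symm
          rw [mul_pow, ← pow_mul, mul_comm 4 m]
      _ ≤ ((m:ℝ)/4)^m := pow_le_pow_left₀ (by positivity) step2 m
      _ ≤ (m.factorial : ℝ) := by
          have h4 : (0:ℝ) < 4^m := by positivity
          rw [div_pow, div_le_iff₀ h4]
          calc (m:ℝ)^m ≤ 4^m * m.factorial := fact4 m
            _ = (m.factorial:ℝ) * 4^m := by ring
  · -- k < m, min = k
    have hd : min k m = k := min_eq_left (le_of_lt hkm)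
    rw [hd]
    have step2 : P^10 * (2*(N:ℝ)) ≤ (m:ℝ)/256 := by
      have h := hPc 9
      have e : 2*(m:ℝ)*(1/2)^9 = (m:ℝ)/256 := by
        rw [show ((1:ℝ)/2)^9 = 1/512 by norm_num]
        ring
      rw [e] at h
      exact_mod_cast h
    have base : P^(10*k) * (2*(N:ℝ))^k = (P^10 * (2*(N:ℝ)))^k := by
      symm
      rw [mul_pow, ← pow_mul, mul_comm 10 k]
    rw [base]
    rcases le_or_gt m (2*k) with hm2k | h2km
    · -- m ≤ 2k : use (m/16)^k ≤ descF
      have hdescf : ((m:ℝ)/16)^k ≤ (m.descFactorial k : ℝ) := by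
        have hkm' : k ≤ m := le_of_lt hkm
        have hfacts : m.descFactorial k * (m-k).factorial = m.factorial :=
          descFactorial_mul_factorial hkm'
        have h1 : ((m-k).factorial : ℝ) ≤ (m:ℝ)^(m-k) := by
          have a1 : (m-k).factorial ≤ (m-k)^(m-k) := Nat.factorial_le_pow _
          have a2 : (m-k)^(m-k) ≤ m^(m-k) := Nat.pow_le_pow_left (by omega) _
          exact_mod_cast le_trans a1 a2
        -- m^k ≤ 16^k * descF
        have h2 : (m:ℝ)^m ≤ 4^m * (m.descFactorial k : ℝ) * (m:ℝ)^(m-k) := by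
          calc (m:ℝ)^m ≤ 4^m * m.factorial := fact4 m
            _ = 4^m * ((m.descFactorial k : ℝ) * ((m-k).factorial : ℝ)) := by
                rw [← hfacts]; push_cast; ring
            _ ≤ 4^m * ((m.descFactorial k : ℝ) * (m:ℝ)^(m-k)) := by
                apply mul_le_mul_of_nonneg_left _ (by positivity)
                apply mul_le_mul_of_nonneg_left h1 (by positivity)
            _ = 4^m * (m.descFactorial k : ℝ) * (m:ℝ)^(m-k) := by ring
        have h3 : (m:ℝ)^m = (m:ℝ)^k * (m:ℝ)^(m-k) := by
          rw [← pow_add]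
          congr 1
          omega
        rw [h3] at h2
        have h4 : (m:ℝ)^k ≤ 4^m * (m.descFactorial k : ℝ) := by
          have hpw : (0:ℝ) < (m:ℝ)^(m-k) := by positivity
          exact le_of_mul_le_mul_right h2 hpw
        have h5 : (4:ℝ)^m ≤ 16^k := by
          calc (4:ℝ)^m ≤ 4^(2*k) := by
                apply pow_le_pow_right₀ (by norm_num) hm2k
            _ = 16^k := by rw [pow_mul]; norm_num
        have h6 : (m:ℝ)^k ≤ 16^k * (m.descFactorial k : ℝ) := by
          calc (m:ℝ)^k ≤ 4^m * (m.descFactorial k : ℝ) := h4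
            _ ≤ 16^k * (m.descFactorial k : ℝ) := by
                apply mul_le_mul_of_nonneg_right h5 (by positivity)
        rw [div_pow, div_le_iff₀ (by positivity : (0:ℝ) < 16^k)]
        calc (m:ℝ)^k ≤ 16^k * (m.descFactorial k : ℝ) := h6
          _ = (m.descFactorial k : ℝ) * 16^k := by ring
      calc (P^10 * (2*(N:ℝ)))^k ≤ ((m:ℝ)/256)^k := pow_le_pow_left₀ (by positivity) step2 k
        _ ≤ ((m:ℝ)/16)^k := by
            apply pow_le_pow_left₀ (by positivity)
            apply div_le_div_of_nonneg_left (le_of_lt hm0) (by norm_num) (by norm_num)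
        _ ≤ (m.descFactorial k : ℝ) := hdescf
    · -- 2k < m : use (m-k)^k ≤ descF
      have hsub : ((m:ℝ)/2) ≤ ((m - k : ℕ) : ℝ) := by
        have : (k:ℝ) ≤ (m:ℝ)/2 := by
          have : (2*k:ℕ) < m := h2km
          have : (2*(k:ℝ)) < m := by exact_mod_cast this
          linarith
        have hc : ((m - k : ℕ) : ℝ) = (m:ℝ) - k :=
          Nat.cast_sub (by omega)
        rw [hc]
        linarith
      calc (P^10 * (2*(N:ℝ)))^k ≤ ((m:ℝ)/256)^k := pow_le_pow_left₀ (by positivity) step2 k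
        _ ≤ (((m-k:ℕ)):ℝ)^k := by
            apply pow_le_pow_left₀ (by positivity)
            calc (m:ℝ)/256 ≤ (m:ℝ)/2 := by
                  apply div_le_div_of_nonneg_left (le_of_lt hm0) (by norm_num) (by norm_num)
              _ ≤ _ := hsub
        _ ≤ (m.descFactorial k : ℝ) := by
            exact_mod_cast sub_pow_le_descFactorial k m

lemma final_bound {N m k : ℕ} (hm : 1 ≤ m) (hN : 2*m ≤ N) :
    ((m:ℝ)/N)^(10*k) * (N.choose m : ℝ) ≤ ((N - 2*min k m).choose (m - min k m) : ℝ) := by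
  set d := min k m with hddef
  have hkey := key_ineq (k := k) hm hN
  have hnr : (N.choose m : ℝ) * (m.descFactorial d : ℝ) ≤
      (2*(N:ℝ))^d * ((N - 2*d).choose (m - d) : ℝ) := by
    have := NR1 k N m hN
    rw [← hddef] at this
    exact_mod_cast this
  have hdpos : (0:ℝ) < (m.descFactorial d : ℝ) := by
    have : 0 < m.descFactorial d := by
      rw [Nat.descFactorial_eq_factorial_mul_choose]
      exact Nat.mul_pos (Nat.factorial_pos _) (Nat.choose_pos (by omega))
    exact_mod_cast this
  rw [← mul_le_mul_iff_of_pos_right hdpos]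
  have hPpow : (0:ℝ) ≤ ((m:ℝ)/N)^(10*k) := by positivity
  calc ((m:ℝ)/N)^(10*k) * (N.choose m : ℝ) * (m.descFactorial d : ℝ)
      = ((m:ℝ)/N)^(10*k) * ((N.choose m : ℝ) * (m.descFactorial d : ℝ)) := by ring
    _ ≤ ((m:ℝ)/N)^(10*k) * ((2*(N:ℝ))^d * ((N - 2*d).choose (m - d) : ℝ)) :=
        mul_le_mul_of_nonneg_left hnr hPpow
    _ = (((m:ℝ)/N)^(10*k) * (2*(N:ℝ))^d) * ((N - 2*d).choose (m - d) : ℝ) := by ring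
    _ ≤ (m.descFactorial d : ℝ) * ((N - 2*d).choose (m - d) : ℝ) := by
        apply mul_le_mul_of_nonneg_right hkey (by positivity)
    _ = ((N - 2*d).choose (m - d) : ℝ) * (m.descFactorial d : ℝ) := by ring


end SliceAux

open SliceAux in
/-- There is a universal constant `C > 0` such that: any integer-valued degree-`≤ k`
function on `S(n,p)` (with `0 < p ≤ 1/2`, `p n ∈ ℤ`) is either identically `0`, or
nonzero with probability at least `p^{C k}`. -/
theorem integer_to_boolean :
    ∃ C : ℝ, 0 < C ∧
      ∀ (n : ℕ) (p : ℝ), 0 < p → p ≤ 1 / 2 → (∃ m : ℤ, (m : ℝ) = p * n) →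
        ∀ (k : ℕ) (f : SlicePoint n p → ℝ),
          (∀ x, ∃ m : ℤ, f x = m) → f ∈ degLE n p k →
          (∀ x, f x = 0) ∨ probNe f (fun _ => 0) ≥ p ^ (C * k) := by
  refine ⟨10, by norm_num, ?_⟩
  intro n p hp hp2 hpn k f _ hdeg
  by_cases hz : ∀ x, f x = 0
  · exact Or.inl hz
  right
  push_neg at hz
  obtain ⟨x0, hx0⟩ := hz
  have hrpow : p ^ ((10:ℝ) * k) = p ^ (10 * k : ℕ) := by
    rw [← Real.rpow_natCast p (10*k)]
    congr 1
    push_cast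
    ring
  rcases Nat.eq_zero_or_pos n with rfl | hn
  · -- n = 0 : slice is a single point, probability is 1
    have hall : ∀ x : SlicePoint 0 p, x = x0 := by
      intro x
      apply Subtype.ext
      funext i
      exact absurd i.2 (by omega)
    have hcardpos : 0 < (Fintype.card (SlicePoint 0 p) : ℝ) := by
      have : 0 < Fintype.card (SlicePoint 0 p) := Fintype.card_pos_iff.mpr ⟨x0⟩
      exact_mod_cast this
    have hone : probNe f (fun _ => 0) = 1 := by
      unfold probNe sExp
      have : ∀ x : SlicePoint 0 p, (if f x = (fun _ => (0:ℝ)) x then (0:ℝ) else 1) = 1 := by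
        intro x
        rw [hall x]
        simp only [if_neg hx0]
      rw [Finset.sum_congr rfl (fun x _ => this x), Finset.sum_const, Finset.card_univ,
        nsmul_eq_mul, mul_one]
      field_simp
    rw [hone, hrpow]
    exact pow_le_one₀ (le_of_lt hp) (by linarith)
  · -- n ≥ 1
    obtain ⟨mz, hmz⟩ := hpn
    have hpn0 : (0:ℝ) < p * n := by
      have : (0:ℝ) < n := by exact_mod_cast hn
      positivity
    set m := mz.toNat with hmdef
    have hm : (m:ℝ) = p * n := by
      rw [hmdef]
      have hmz0 : 0 ≤ mz := by
        by_contra hneg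
        push_neg at hneg
        have : (mz:ℝ) < 0 := by exact_mod_cast hneg
        linarith
      rw [show ((mz.toNat:ℕ):ℝ) = ((mz.toNat:ℤ):ℝ) by push_cast; ring,
        Int.toNat_of_nonneg hmz0]
      exact hmz
    have hm1 : 1 ≤ m := by
      have h0 : (0:ℝ) < (m:ℝ) := by rw [hm]; exact hpn0
      have : 0 < m := by exact_mod_cast h0
      omega
    have h2m : 2 * m ≤ n := by
      have h1 : ((2*m : ℕ) : ℝ) ≤ (n:ℝ) := by
        push_cast
        rw [hm]
        have : (0:ℝ) < n := by exact_mod_cast hn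
        nlinarith
      exact_mod_cast h1
    have hnn0 : (0:ℝ) < n := by exact_mod_cast hn
    have hpeq : p = (m:ℝ)/n := by
      rw [eq_div_iff (ne_of_gt hnn0)]
      linarith [hm]
    -- transfer degree
    set R : ((Fin n → Bool) → ℝ) →ₗ[ℝ] (SlicePoint n p → ℝ) :=
      LinearMap.funLeft ℝ ℝ (Subtype.val) with hR
    have hmapped : degLE n p k ≤ Submodule.map R (spanLE univ k) := by
      rw [degLE]
      apply Submodule.span_le.mpr
      rintro g ⟨T, hTk, rfl⟩
      exact ⟨mon T, mon_mem_spanLE (Finset.subset_univ T) hTk, rfl⟩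
    obtain ⟨f', hf', hff'⟩ := hmapped hdeg
    have happ : ∀ x : SlicePoint n p, f x = f' x.1 := by
      intro x
      rw [← hff']
      rfl
    -- membership transfer
    have hmemD : ∀ x : SlicePoint n p, x.1 ∈ Dom univ m := by
      intro x
      rw [mem_Dom]
      refine ⟨fun i hi => absurd (Finset.mem_univ i) hi, ?_⟩
      have h2 : ((univ.filter (fun i => x.1 i = true)).card : ℝ) = (m:ℝ) := x.2.trans hm.symm
      exact_mod_cast h2
    -- counting
    set cnt := ((Dom univ m).filter (fun v => f' v ≠ 0)).card with hcnt
    have hcard : Fintype.card (SlicePoint n p) = n.choose m := by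
      rw [Fintype.card_subtype]
      have : univ.filter (fun x : Fin n → Bool =>
          ((univ.filter (fun i => x i = true)).card : ℝ) = p * n) = Dom univ m := by
        ext x
        rw [Finset.mem_filter, mem_Dom]
        constructor
        · intro ⟨_, h⟩
          refine ⟨fun i hi => absurd (Finset.mem_univ i) hi, ?_⟩
          have h2 : ((univ.filter (fun i => x i = true)).card : ℝ) = (m:ℝ) := h.trans hm.symm
          exact_mod_cast h2
        · intro ⟨_, h⟩
          refine ⟨Finset.mem_univ x, ?_⟩
          rw [h]
          exact hm
      rw [this, card_Dom, Finset.card_univ, Fintype.card_fin]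
    have hsum : (∑ x : SlicePoint n p, (if f x = (fun _ => (0:ℝ)) x then (0:ℝ) else 1)) = cnt := by
      have h1 : ∀ x : SlicePoint n p, (if f x = (fun _ => (0:ℝ)) x then (0:ℝ) else 1)
          = (if ¬ (f x = 0) then (1:ℝ) else 0) := by
        intro x
        by_cases h : f x = 0 <;> simp [h]
      rw [Finset.sum_congr rfl (fun x _ => h1 x), Finset.sum_boole]
      congr 1
      rw [hcnt]
      refine Finset.card_bij' (fun (x : SlicePoint n p) _ => x.1)
        (fun v hv => (⟨v, by
          rw [Finset.mem_filter] at hv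
          rw [(mem_Dom.mp hv.1).2]
          exact hm⟩ : SlicePoint n p)) ?_ ?_ ?_ ?_
      · intro x hx
        rw [Finset.mem_filter] at hx ⊢
        exact ⟨hmemD x, by rw [← happ x]; exact hx.2⟩
      · intro v hv
        rw [Finset.mem_filter]
        refine ⟨Finset.mem_univ _, ?_⟩
        rw [Finset.mem_filter] at hv
        rw [happ]
        exact hv.2
      · intro x hx; rfl
      · intro v hv; rfl
    have hchoosepos : (0:ℝ) < (n.choose m : ℝ) := by
      have : 0 < n.choose m := Nat.choose_pos (by omega)
      exact_mod_cast this
    have hmain := main_count k univ m f'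
      (by rw [Finset.card_univ, Fintype.card_fin]; exact h2m) hf'
      x0.1 (hmemD x0) (by rw [← happ x0]; exact hx0)
    rw [Finset.card_univ, Fintype.card_fin] at hmain
    have hfb := final_bound (k := k) hm1 h2m
    have hfinal : p ^ (10*k : ℕ) * (n.choose m : ℝ) ≤ cnt := by
      calc p ^ (10*k : ℕ) * (n.choose m : ℝ)
          = ((m:ℝ)/n) ^ (10*k) * (n.choose m : ℝ) := by rw [hpeq]
        _ ≤ ((n - 2*min k m).choose (m - min k m) : ℝ) := hfb
        _ ≤ (cnt : ℝ) := by exact_mod_cast hmain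
    rw [ge_iff_le, hrpow]
    unfold probNe sExp
    rw [hsum, hcard]
    rw [le_div_iff₀ hchoosepos]
    exact hfinal
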